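/- Let γ be a real number. Define, for real x, y and t, c(x,y,t) = (1 − e^{−2γt}·cos x·cos y)/2, p(x,y,t) = e^{−2t}(cos x·cos y − 1), u₁(x,y,t) = e^{−2t}·sin x·cos y, u₂(x,y,t) = e^{−2t}·cos x·sin y, q(x,y,t) = 2e^{−2t}, and c̃(x,y,t) = (e^{−2γt}((1/2)sin²x·cos²y + (1/2)cos²x·sin²y − cos x·cos y) + 1)/2. Then for all real x, y, t: (i) (u₁, u₂) = −(∂p/∂x, ∂p/∂y); (ii) ∂p/∂t + ∂u₁/∂x + ∂u₂/∂y = q; (iii) ∂c/∂t + u₁·∂c/∂x + u₂·∂c/∂y − γ·(∂²c/∂x² + ∂²c/∂y²) = (c̃ − c)·q. Moreover, on the boundary of [0,2π]²: u₁(0,y,t) = u₁(2π,y,t) = 0, u₂(x,0,t) = u₂(x,2π,t) = 0, ∂c/∂x(0,y,t) = ∂c/∂x(2π,y,t) = 0, ∂c/∂y(x,0,t) = ∂c/∂y(x,2π,t) = 0; c(x,y,0) = (1 − cos x·cos y)/2 and p(x,y,0) = cos x·cos y − 1; and if γ ≥ 0 then 0 ≤ c(x,y,t) ≤ 1 for all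 x, y and all t ≥ 0. -/

import Mathlib

noncomputable section

namespace ExactSolution2D

/-- Concentration `c(x,y,t) = (1 - e^{-2γt}·cos x·cos y)/2`. -/
def c (γ x y t : ℝ) : ℝ := (1 - Real.exp (-(2 * γ * t)) * Real.cos x * Real.cos y) / 2

/-- Pressure `p(x,y,t) = e^{-2t}(cos x·cos y - 1)`. -/
def p (x y t : ℝ) : ℝ := Real.exp (-(2 * t)) * (Real.cos x * Real.cos y - 1)

/-- First velocity component `u₁(x,y,t) = e^{-2t}·sin x·cos y`. -/
def u1 (x y t : ℝ) : ℝ := Real.exp (-(2 * t)) * Real.sin x * Real.cos y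

/-- Second velocity component `u₂(x,y,t) = e^{-2t}·cos x·sin y`. -/
def u2 (x y t : ℝ) : ℝ := Real.exp (-(2 * t)) * Real.cos x * Real.sin y

/-- External volumetric flow rate `q(x,y,t) = 2e^{-2t}`. -/
def q (x y t : ℝ) : ℝ := 2 * Real.exp (-(2 * t))

/-- Injected concentration
`c̃ = (e^{-2γt}((1/2)sin²x·cos²y + (1/2)cos²x·sin²y - cos x·cos y) + 1)/2`. -/
def ctld (γ x y t : ℝ) : ℝ :=
  (Real.exp (-(2 * γ * t)) *
      ((1 / 2) * Real.sin x ^ 2 * Real.cos y ^ 2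
        + (1 / 2) * Real.cos x ^ 2 * Real.sin y ^ 2
        - Real.cos x * Real.cos y) + 1) / 2


lemma hd_px (y t x : ℝ) : HasDerivAt (fun x' => p x' y t)
    (Real.exp (-(2 * t)) * (-Real.sin x * Real.cos y)) x := by
  unfold p
  have h := (((Real.hasDerivAt_cos x).mul_const (Real.cos y)).sub_const 1).const_mul
    (Real.exp (-(2 * t)))
  convert h using 1 <;> ring

lemma hd_py (x t y : ℝ) : HasDerivAt (fun y' => p x y' t)
    (Real.exp (-(2 * t)) * (Real.cos x * -Real.sin y)) y := by
  unfold p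
  have h := (((Real.hasDerivAt_cos y).const_mul (Real.cos x)).sub_const 1).const_mul
    (Real.exp (-(2 * t)))
  convert h using 1 <;> ring

lemma hd_exp (a t : ℝ) : HasDerivAt (fun t' : ℝ => Real.exp (-(a * t')))
    (-a * Real.exp (-(a * t))) t := by
  have h1 : HasDerivAt (fun t' : ℝ => -(a * t')) (-a) t := by
    exact (((hasDerivAt_id t).const_mul a).neg).congr_deriv (by ring)
  simpa [mul_comm] using h1.exp

lemma hd_pt (x y t : ℝ) : HasDerivAt (fun t' => p x y t')
    (-2 * Real.exp (-(2 * t)) * (Real.cos x * Real.cos y - 1)) t := by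
  unfold p
  have h := (hd_exp 2 t).mul_const (Real.cos x * Real.cos y - 1)
  convert h using 1 <;> ring

lemma hd_u1x (y t x : ℝ) : HasDerivAt (fun x' => u1 x' y t)
    (Real.exp (-(2 * t)) * Real.cos x * Real.cos y) x := by
  unfold u1
  have h := (((Real.hasDerivAt_sin x).const_mul (Real.exp (-(2 * t)))).mul_const
    (Real.cos y))
  convert h using 2 <;> ring

lemma hd_u2y (x t y : ℝ) : HasDerivAt (fun y' => u2 x y' t)
    (Real.exp (-(2 * t)) * Real.cos x * Real.cos y) y := by
  unfold u2
  have h := ((Real.hasDerivAt_sin y).const_mul (Real.exp (-(2 * t)) * Real.cos x))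
  convert h using 2 <;> ring

lemma hd_cx (γ y t x : ℝ) : HasDerivAt (fun x' => c γ x' y t)
    (Real.exp (-(2 * γ * t)) * Real.sin x * Real.cos y / 2) x := by
  unfold c
  have h := ((((Real.hasDerivAt_cos x).const_mul
    (Real.exp (-(2 * γ * t)))).mul_const (Real.cos y)).const_sub 1).div_const 2
  exact h.congr_deriv (by ring)

lemma hd_cy (γ x t y : ℝ) : HasDerivAt (fun y' => c γ x y' t)
    (Real.exp (-(2 * γ * t)) * Real.cos x * Real.sin y / 2) y := by
  unfold c
  have h := (((Real.hasDerivAt_cos y).const_mul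
    (Real.exp (-(2 * γ * t)) * Real.cos x)).const_sub 1).div_const 2
  exact h.congr_deriv (by ring)

lemma deriv_cx (γ y t : ℝ) : deriv (fun x' => c γ x' y t)
    = fun x => Real.exp (-(2 * γ * t)) * Real.sin x * Real.cos y / 2 :=
  funext fun x => (hd_cx γ y t x).deriv

lemma deriv_cy (γ x t : ℝ) : deriv (fun y' => c γ x y' t)
    = fun y => Real.exp (-(2 * γ * t)) * Real.cos x * Real.sin y / 2 :=
  funext fun y => (hd_cy γ x t y).deriv

lemma hd_ct (γ x y t : ℝ) : HasDerivAt (fun t' => c γ x y t')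
    (2 * γ * Real.exp (-(2 * γ * t)) * Real.cos x * Real.cos y / 2) t := by
  unfold c
  have h := ((((hd_exp (2 * γ) t).mul_const (Real.cos x)).mul_const
    (Real.cos y)).const_sub 1).div_const 2
  exact h.congr_deriv (by ring)

lemma hd_cxx (γ y t x : ℝ) : HasDerivAt (deriv (fun x' => c γ x' y t))
    (Real.exp (-(2 * γ * t)) * Real.cos x * Real.cos y / 2) x := by
  rw [deriv_cx]
  have h := (((Real.hasDerivAt_sin x).const_mul
    (Real.exp (-(2 * γ * t)))).mul_const (Real.cos y)).div_const 2
  convert h using 1 <;> ring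

lemma hd_cyy (γ x t y : ℝ) : HasDerivAt (deriv (fun y' => c γ x y' t))
    (Real.exp (-(2 * γ * t)) * Real.cos x * Real.cos y / 2) y := by
  rw [deriv_cy]
  have h := ((Real.hasDerivAt_sin y).const_mul
    (Real.exp (-(2 * γ * t)) * Real.cos x)).div_const 2
  convert h using 1 <;> ring

/-- Example 4.4: the constructed analytical solution of the 2D compressible miscible
displacement system with `φ = κ = μ = 1`, `z₁ = z₂ = 1` and `D = γ·I`. -/
theorem exact_solution_2d (γ : ℝ) :
    -- (i) Darcy's law: (u₁, u₂) = -(p_x, p_y)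
    (∀ x y t : ℝ, u1 x y t = -(deriv (fun x' => p x' y t) x)) ∧
    (∀ x y t : ℝ, u2 x y t = -(deriv (fun y' => p x y' t) y)) ∧
    -- (ii) pressure equation: p_t + (u₁)_x + (u₂)_y = q
    (∀ x y t : ℝ,
      deriv (fun t' => p x y t') t + deriv (fun x' => u1 x' y t) x
        + deriv (fun y' => u2 x y' t) y = q x y t) ∧
    -- (iii) concentration equation: c_t + u₁c_x + u₂c_y - γ(c_xx + c_yy) = (c̃ - c)q
    (∀ x y t : ℝ,
      deriv (fun t' => c γ x y t') t
        + u1 x y t * deriv (fun x' => c γ x' y t) x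
        + u2 x y t * deriv (fun y' => c γ x y' t) y
        - γ * (deriv (deriv (fun x' => c γ x' y t)) x
              + deriv (deriv (fun y' => c γ x y' t)) y)
        = (ctld γ x y t - c γ x y t) * q x y t) ∧
    -- boundary conditions on ∂([0,2π]²)
    (∀ y t : ℝ, u1 0 y t = 0 ∧ u1 (2 * Real.pi) y t = 0) ∧
    (∀ x t : ℝ, u2 x 0 t = 0 ∧ u2 x (2 * Real.pi) t = 0) ∧
    (∀ y t : ℝ, deriv (fun x' => c γ x' y t) 0 = 0 ∧
      deriv (fun x' => c γ x' y t) (2 * Real.pi) = 0) ∧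
    (∀ x t : ℝ, deriv (fun y' => c γ x y' t) 0 = 0 ∧
      deriv (fun y' => c γ x y' t) (2 * Real.pi) = 0) ∧
    -- initial conditions
    (∀ x y : ℝ, c γ x y 0 = (1 - Real.cos x * Real.cos y) / 2) ∧
    (∀ x y : ℝ, p x y 0 = Real.cos x * Real.cos y - 1) ∧
    -- bounds: 0 ≤ c ≤ 1 for t ≥ 0 when γ ≥ 0
    (0 ≤ γ → ∀ x y t : ℝ, 0 ≤ t → 0 ≤ c γ x y t ∧ c γ x y t ≤ 1) := by
  refine ⟨?_, ?_, ?_, ?_, ?_, ?_, ?_, ?_, ?_, ?_, ?_⟩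
  · intro x y t
    rw [(hd_px y t x).deriv]; unfold u1; ring
  · intro x y t
    rw [(hd_py x t y).deriv]; unfold u2; ring
  · intro x y t
    rw [(hd_pt x y t).deriv, (hd_u1x y t x).deriv, (hd_u2y x t y).deriv]
    unfold q; ring
  · intro x y t
    rw [(hd_ct γ x y t).deriv, (hd_cx γ y t x).deriv, (hd_cy γ x t y).deriv,
      (hd_cxx γ y t x).deriv, (hd_cyy γ x t y).deriv]
    unfold u1 u2 ctld c q
    have hs : Real.sin x ^ 2 = 1 - Real.cos x ^ 2 := Real.sin_sq x
    ring
  · intro y t; constructor <;> simp [u1, Real.sin_two_pi]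
  · intro x t; constructor <;> simp [u2, Real.sin_two_pi]
  · intro y t
    rw [(hd_cx γ y t 0).deriv, (hd_cx γ y t (2 * Real.pi)).deriv]
    simp [Real.sin_two_pi]
  · intro x t
    rw [(hd_cy γ x t 0).deriv, (hd_cy γ x t (2 * Real.pi)).deriv]
    simp [Real.sin_two_pi]
  · intro x y; simp [c]
  · intro x y; simp [p]
  · intro hγ x y t ht
    have hE1 : Real.exp (-(2 * γ * t)) ≤ 1 := by
      rw [Real.exp_le_one_iff]; nlinarith
    have hE0 : (0:ℝ) < Real.exp (-(2 * γ * t)) := Real.exp_pos _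
    have habs : |Real.exp (-(2 * γ * t)) * Real.cos x * Real.cos y| ≤ 1 := by
      rw [abs_mul, abs_mul, abs_of_pos hE0]
      have h1 : |Real.cos x| * |Real.cos y| ≤ 1 :=
        mul_le_one₀ (Real.abs_cos_le_one x) (abs_nonneg _) (Real.abs_cos_le_one y)
      have h2 : 0 ≤ |Real.cos x| * |Real.cos y| :=
        mul_nonneg (abs_nonneg _) (abs_nonneg _)
      nlinarith [h1, h2]
    rw [abs_le] at habs
    unfold c
    constructor <;> linarith [habs.1, habs.2]


end ExactSolution2D
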